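/- Fix an integer n >= 1 and an integer l with n not dividing l, and set d := n/gcd(l,n) (so d >= 2). For any permutation u in the symmetric group S_n, the number of (u,c^l)-equivariant functions f : [n] -> [n] union {0} equals (n+1)^{r_d(u)}, where r_d(u) is the number of cycles of u whose length is divisible by d. -/

import Mathlib

set_option linter.unusedSectionVars false

open Equiv Equiv.Perm

section
variable {n : ℕ} [NeZero n] {l : ℤ}

private def IsEqv (l : ℤ) (v : Perm (ZMod n)) (f : ZMod n → Option (ZMod n)) : Prop :=
  ∀ j : ZMod n, f (v j) = Option.map (fun x => x + (l : ZMod n)) (f j)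

private lemma omap_omap (s t : ZMod n) (o : Option (ZMod n)) :
    Option.map (fun x => x + s) (Option.map (fun x => x + t) o)
      = Option.map (fun x => x + (t + s)) o := by
  cases o <;> simp [add_assoc]

private lemma omap_zero (o : Option (ZMod n)) :
    Option.map (fun x => x + (0 : ZMod n)) o = o := by cases o <;> simp

private lemma eqv_fixed (hl : (l : ZMod n) ≠ 0) {v : Perm (ZMod n)}
    {f : ZMod n → Option (ZMod n)} (hf : IsEqv l v f) {j : ZMod n} (hj : v j = j) :
    f j = none := by
  have h := hf j
  rw [hj] at h
  cases hfj : f j with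
  | none => rfl
  | some x =>
    rw [hfj, Option.map_some] at h
    exact absurd ((left_eq_add).mp (Option.some_injective _ h)) hl

private lemma eqv_pow {v : Perm (ZMod n)} {f : ZMod n → Option (ZMod n)}
    (hf : IsEqv l v f) (k : ℕ) (j : ZMod n) :
    f ((v ^ k) j) = Option.map (fun x => x + (k : ZMod n) * (l : ZMod n)) (f j) := by
  induction k with
  | zero => simp [omap_zero]
  | succ k ih =>
    have h1 : (v ^ (k + 1)) j = v ((v ^ k) j) := by
      rw [pow_succ', Perm.mul_apply]
    rw [h1, hf _, ih, omap_omap]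
    congr 1
    funext x
    push_cast
    ring

private lemma eqv_zpow {v : Perm (ZMod n)} {f : ZMod n → Option (ZMod n)}
    (hf : IsEqv l v f) (k : ℤ) (j : ZMod n) :
    f ((v ^ k) j) = Option.map (fun x => x + (k : ZMod n) * (l : ZMod n)) (f j) := by
  rcases le_or_gt 0 k with hk | hk
  · lift k to ℕ using hk
    rw [zpow_natCast]
    simpa using eqv_pow hf k j
  · set j' := (v ^ k) j with hj'
    obtain ⟨m, hm⟩ : ∃ m : ℕ, (m : ℤ) = -k := ⟨(-k).toNat, Int.toNat_of_nonneg (by omega)⟩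
    have hjj : (v ^ m) j' = j := by
      rw [hj', ← Perm.mul_apply, ← zpow_natCast v m, ← zpow_add, hm]; simp
    have h1 : f j = Option.map (fun x => x + (m : ZMod n) * (l : ZMod n)) (f j') := by
      rw [← hjj]; exact eqv_pow hf m j'
    have hmk0 : (m : ZMod n) * (l : ZMod n) + (k : ZMod n) * (l : ZMod n) = 0 := by
      have h2 : ((m : ℤ) + k : ℤ) = 0 := by omega
      have h3 := congrArg (Int.cast : ℤ → ZMod n) h2
      push_cast at h3
      rw [← add_mul, h3, zero_mul]
    cases hfj' : f j' with
    | none => rw [hfj'] at h1; rw [h1]; rfl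
    | some x =>
      rw [hfj'] at h1
      rw [h1]
      simp only [Option.map_some]
      rw [add_assoc, hmk0, add_zero]
end

section
variable {n : ℕ} [NeZero n] {l : ℤ}

private lemma eqv_ext {v : Perm (ZMod n)} (hl : (l : ZMod n) ≠ 0) (hv : v.IsCycle)
    {a : ZMod n} (ha : v a ≠ a) (hab : ∀ b, v b ≠ b → v.SameCycle a b)
    {f g : ZMod n → Option (ZMod n)} (hf : IsEqv l v f) (hg : IsEqv l v g)
    (hfg : f a = g a) : f = g := by
  funext j
  by_cases hj : v j = j
  · rw [eqv_fixed hl hf hj, eqv_fixed hl hg hj]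
  · obtain ⟨k, hk⟩ := hab j hj
    rw [← hk, eqv_zpow hf k a, eqv_zpow hg k a, hfg]

private lemma zpow_apply_eq_self_iff {v : Perm (ZMod n)} (hv : v.IsCycle)
    {a : ZMod n} (ha : v a ≠ a) (k : ℤ) :
    (v ^ k) a = a ↔ (v.support.card : ℤ) ∣ k := by
  have hm : orderOf v = v.support.card := hv.orderOf
  have hmpos : 0 < v.support.card := by
    have := hv.two_le_card_support; omega
  have hvm : v ^ (v.support.card : ℤ) = 1 := by
    apply orderOf_dvd_iff_zpow_eq_one.mp
    rw [hm]
  constructor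
  · intro h
    set r := k % (v.support.card : ℤ) with hr
    have hr0 : 0 ≤ r := Int.emod_nonneg k (by exact_mod_cast hmpos.ne')
    have hrm : r < v.support.card := Int.emod_lt_of_pos k (by exact_mod_cast hmpos)
    have hk : v ^ k = v ^ r := by
      conv_lhs => rw [← Int.mul_ediv_add_emod k (v.support.card : ℤ)]
      rw [zpow_add, zpow_mul, hvm, one_zpow, one_mul, ← hr]
    have h2 : (v ^ r.toNat) a = a := by
      rw [← zpow_natCast, Int.toNat_of_nonneg hr0, ← hk, h]
    have h3 : v ^ r.toNat = 1 := (hv.pow_eq_one_iff' ha).mpr h2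
    have h4 : v.support.card ∣ r.toNat := hm ▸ orderOf_dvd_of_pow_eq_one h3
    have h5 : r.toNat < v.support.card := by omega
    have h6 : r = 0 := by
      have := Nat.eq_zero_of_dvd_of_lt h4 h5
      omega
    exact Int.dvd_of_emod_eq_zero h6
  · rintro ⟨t, rfl⟩
    rw [zpow_mul, hvm, one_zpow, Perm.one_apply]

end

private lemma nat_dvd_aux (n a m : ℕ) (hn : n ≠ 0) : n ∣ m * a ↔ (n / Nat.gcd a n) ∣ m := by
  set g := Nat.gcd a n with hg
  have hg0 : 0 < g := Nat.gcd_pos_of_pos_right a (Nat.pos_of_ne_zero hn)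
  have hgn : g ∣ n := Nat.gcd_dvd_right a n
  have hga : g ∣ a := Nat.gcd_dvd_left a n
  constructor
  · intro h
    have h1 : (n / g) * g ∣ (m * (a / g)) * g := by
      rw [Nat.div_mul_cancel hgn, mul_assoc, Nat.div_mul_cancel hga]; exact h
    have h2 : (n / g) ∣ m * (a / g) := (Nat.mul_dvd_mul_iff_right hg0).mp h1
    exact ((Nat.coprime_div_gcd_div_gcd hg0).symm).dvd_of_dvd_mul_right h2
  · intro h
    calc n = (n / g) * g := (Nat.div_mul_cancel hgn).symm
    _ ∣ m * ((a / g) * g) := by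
        rw [← mul_assoc]; exact Nat.mul_dvd_mul (h.trans (dvd_mul_right _ _)) dvd_rfl
    _ = m * a := by rw [Nat.div_mul_cancel hga]

private lemma int_dvd_aux (n : ℕ) [NeZero n] (l : ℤ) (m : ℕ) :
    (n : ℤ) ∣ (m : ℤ) * l ↔ (n / l.gcd n) ∣ m := by
  rw [← Int.natAbs_dvd_natAbs]
  simp only [Int.natAbs_mul, Int.natAbs_natCast]
  have h : l.gcd n = Nat.gcd l.natAbs n := by simp [Int.gcd]
  rw [h]
  exact nat_dvd_aux n l.natAbs m (NeZero.ne n)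

private lemma zmod_dvd_aux (n : ℕ) [NeZero n] (l : ℤ) (m : ℕ) :
    ((m : ZMod n) * (l : ZMod n) = 0) ↔ (n / l.gcd n) ∣ m := by
  rw [← int_dvd_aux n l m, ← ZMod.intCast_zmod_eq_zero_iff_dvd]
  push_cast
  rfl

section
variable {n : ℕ} [NeZero n] {l : ℤ}

private lemma exp_congr {v : Perm (ZMod n)} (hv : v.IsCycle) {a : ZMod n} (ha : v a ≠ a)
    (hd : (n / l.gcd n) ∣ v.support.card) {k k' : ℤ} (h : (v ^ k) a = (v ^ k') a) :
    (k : ZMod n) * (l : ZMod n) = (k' : ZMod n) * (l : ZMod n) := by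
  have h1 : (v ^ (k - k')) a = a := by
    have h2 : (v ^ (-k' + k)) a = (v ^ (-k')) ((v ^ k) a) := by
      rw [← Perm.mul_apply, ← zpow_add]
    have h3 : (v ^ (-k')) ((v ^ k') a) = a := by
      rw [← Perm.mul_apply, ← zpow_add]; simp
    rw [h, h3] at h2
    rw [show k - k' = -k' + k by ring, h2]
  obtain ⟨t, ht⟩ := (zpow_apply_eq_self_iff hv ha _).mp h1
  have hnml : (n : ℤ) ∣ (v.support.card : ℤ) * l := (int_dvd_aux n l _).mpr hd
  have hdvd : (n : ℤ) ∣ (k - k') * l := by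
    rw [ht, show ((v.support.card : ℤ) * t) * l = t * ((v.support.card : ℤ) * l) by ring]
    exact hnml.mul_left t
  have hz : (((k - k') * l : ℤ) : ZMod n) = 0 := (ZMod.intCast_zmod_eq_zero_iff_dvd _ _).mpr hdvd
  push_cast at hz
  rw [sub_mul] at hz
  exact sub_eq_zero.mp hz

private lemma card_cycle (hl : (l : ZMod n) ≠ 0) {v : Perm (ZMod n)} (hv : v.IsCycle) :
    Nat.card {f : ZMod n → Option (ZMod n) // IsEqv l v f} =
      if (n / l.gcd n) ∣ v.support.card then n + 1 else 1 := by
  obtain ⟨a, ha, hab⟩ := id hv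
  by_cases hd : (n / l.gcd n) ∣ v.support.card
  · rw [if_pos hd]
    have key : Function.Bijective (fun f : {f : ZMod n → Option (ZMod n) // IsEqv l v f} => f.1 a) := by
      constructor
      · intro f g hfg
        exact Subtype.ext (eqv_ext hl hv ha hab f.2 g.2 hfg)
      · intro o
        have heqv : IsEqv l v (fun j => if h : v.SameCycle a j then
            Option.map (fun x => x + ((h.choose : ZMod n) * (l : ZMod n))) o else none) := by
          intro j
          by_cases hj : v.SameCycle a j
          · have hj' : v.SameCycle a (v j) := ⟨1 + hj.choose, by
              show (v ^ (1 + hj.choose)) a = v j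
              rw [zpow_add, zpow_one, Perm.mul_apply, hj.choose_spec]⟩
            have hw : (v ^ (1 + hj.choose)) a = v j := by
              rw [zpow_add, zpow_one, Perm.mul_apply, hj.choose_spec]
            have e := exp_congr hv ha hd (k := hj'.choose) (k' := 1 + hj.choose)
              (hj'.choose_spec.trans hw.symm)
            simp only [dif_pos hj, dif_pos hj']
            rw [omap_omap]
            congr 1
            funext x
            push_cast at e
            rw [e]
            ring
          · have hj2 : ¬ v.SameCycle a (v j) := by
              rintro ⟨i, hi⟩
              exact hj ⟨-1 + i, by
                show (v ^ (-1 + i)) a = j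
                rw [zpow_add, Perm.mul_apply, hi, zpow_neg_one, ← Perm.mul_apply, inv_mul_cancel, Perm.one_apply]⟩
            simp only [dif_neg hj, dif_neg hj2, Option.map_none]
        refine ⟨⟨_, heqv⟩, ?_⟩
        simp only
        have hsc : v.SameCycle a a := ⟨0, by simp⟩
        rw [dif_pos hsc]
        have hw0 : (v ^ (0 : ℤ)) a = a := by simp
        have e := exp_congr hv ha hd (k := hsc.choose) (k' := 0) (hsc.choose_spec.trans hw0.symm)
        push_cast at e
        rw [zero_mul] at e
        rw [e, omap_zero]
    rw [Nat.card_eq_of_bijective _ key, Nat.card_eq_fintype_card, Fintype.card_option,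
      ZMod.card n]
  · rw [if_neg hd]
    have hnone : ∀ f : {f : ZMod n → Option (ZMod n) // IsEqv l v f}, f.1 = fun _ => none := by
      rintro ⟨f, hf⟩
      have hfa : f a = none := by
        have h1 : (v ^ (v.support.card : ℤ)) a = a :=
          (zpow_apply_eq_self_iff hv ha _).mpr dvd_rfl
        have h2 := eqv_zpow hf (v.support.card : ℤ) a
        rw [h1] at h2
        cases hfa : f a with
        | none => rfl
        | some x =>
          rw [hfa, Option.map_some] at h2
          have h3 : x = x + ((v.support.card : ℤ) : ZMod n) * (l : ZMod n) :=
            Option.some_injective _ h2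
          have h4 : ((v.support.card : ℤ) : ZMod n) * (l : ZMod n) = 0 := (left_eq_add).mp h3
          push_cast at h4
          exact absurd ((zmod_dvd_aux n l _).mp h4) hd
      exact eqv_ext hl hv ha hab hf (fun j => rfl) hfa
    rw [Nat.card_eq_one_iff_unique]
    exact ⟨⟨fun f g => Subtype.ext ((hnone f).trans (hnone g).symm)⟩,
      ⟨⟨fun _ => none, fun j => rfl⟩⟩⟩

end

section
variable {n : ℕ} [NeZero n] {l : ℤ}

private lemma card_mul (hl : (l : ZMod n) ≠ 0) {σ τ : Perm (ZMod n)} (hd : σ.Disjoint τ) :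
    Nat.card {f : ZMod n → Option (ZMod n) // IsEqv l (σ * τ) f} =
      Nat.card {f : ZMod n → Option (ZMod n) // IsEqv l σ f} *
      Nat.card {f : ZMod n → Option (ZMod n) // IsEqv l τ f} := by
  classical
  have hfix : ∀ j ∈ σ.support, τ j = j := fun j hj =>
    (hd j).resolve_left (Perm.mem_support.mp hj)
  have h1 : ∀ j ∈ σ.support, (σ * τ) j = σ j := fun j hj => by
    rw [Perm.mul_apply, hfix j hj]
  have h2 : ∀ j ∈ σ.support, σ j ∈ σ.support := fun j hj => Perm.apply_mem_support.mpr hj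
  have hds := Finset.disjoint_left.mp hd.disjoint_support
  have h4 : ∀ j, j ∉ σ.support → τ j ∉ σ.support := by
    intro j hj
    by_cases hjt : j ∈ τ.support
    · intro hc
      exact hds hc (Perm.apply_mem_support.mpr hjt)
    · rwa [Perm.notMem_support.mp hjt]
  have h3 : ∀ j, j ∉ σ.support → (σ * τ) j = τ j := by
    intro j hj
    rw [Perm.mul_apply]
    exact Perm.notMem_support.mp (h4 j hj)
  have e : {f : ZMod n → Option (ZMod n) // IsEqv l (σ * τ) f} ≃
      {f : ZMod n → Option (ZMod n) // IsEqv l σ f} ×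
      {f : ZMod n → Option (ZMod n) // IsEqv l τ f} := by
    refine
      { toFun := fun f => (⟨fun j => if j ∈ σ.support then f.1 j else none, ?_⟩,
                           ⟨fun j => if j ∈ σ.support then none else f.1 j, ?_⟩)
        invFun := fun p => ⟨fun j => if j ∈ σ.support then p.1.1 j else p.2.1 j, ?_⟩
        left_inv := ?_
        right_inv := ?_ }
    · intro j
      dsimp only
      by_cases hj : j ∈ σ.support
      · rw [if_pos (h2 j hj), if_pos hj, ← h1 j hj, f.2 j]
      · rw [if_neg, if_neg hj]
        · rfl
        · rwa [Perm.notMem_support.mp hj]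
    · intro j
      dsimp only
      by_cases hj : j ∈ σ.support
      · rw [hfix j hj, if_pos hj]
        rfl
      · rw [if_neg (h4 j hj), if_neg hj, ← h3 j hj, f.2 j]
    · intro j
      dsimp only
      by_cases hj : j ∈ σ.support
      · rw [h1 j hj, if_pos (h2 j hj), if_pos hj, p.1.2 j]
      · rw [h3 j hj, if_neg (h4 j hj), if_neg hj, p.2.2 j]
    · intro f
      apply Subtype.ext
      funext j
      by_cases hj : j ∈ σ.support <;> simp [hj]
    · rintro ⟨f₁, f₂⟩
      refine Prod.ext (Subtype.ext (funext fun j => ?_)) (Subtype.ext (funext fun j => ?_))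
      · dsimp only
        by_cases hj : j ∈ σ.support
        · simp [hj]
        · simp only [hj, if_false, if_neg hj]
          exact (eqv_fixed hl f₁.2 (Perm.notMem_support.mp hj)).symm
      · dsimp only
        by_cases hj : j ∈ σ.support
        · simp only [hj, if_true, if_pos hj]
          exact (eqv_fixed hl f₂.2 (hfix j hj)).symm
        · simp [hj]
  rw [Nat.card_congr e, Nat.card_prod]

end

/-- Identify `[n]` with `ZMod n`, so the Coxeter element `c = (1,2,…,n)` acts by `j ↦ j + 1`
and `c^l` acts by `j ↦ j + l`; extend the action to `[n] ∪ {0}` (modelled by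
`Option (ZMod n)`) by fixing the extra point `0` (modelled by `none`).

Proposition: for `u ∈ S_n` and `c^l ≠ 1` (i.e. `n ∤ l`), the number of
`(u, c^l)`-equivariant functions `f : [n] → [n] ∪ {0}` is `(n+1)^{r_d(u)}`, where
`d = n / gcd(l,n)` and `r_d(u)` is the number of cycles of `u` whose length is divisible
by `d` (since `d ≥ 2`, fixed points, which are omitted from `Equiv.Perm.cycleType`,
never qualify). -/
theorem stmt2 (n : ℕ) [NeZero n] (l : ℤ) (hl : ¬ (n : ℤ) ∣ l) (u : Equiv.Perm (ZMod n)) :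
    Nat.card {f : ZMod n → Option (ZMod n) //
        ∀ j : ZMod n, f (u j) = Option.map (fun x => x + (l : ZMod n)) (f j)} =
      (n + 1) ^ Multiset.card (u.cycleType.filter fun m => (n / l.gcd n) ∣ m) := by
  have hl' : (l : ZMod n) ≠ 0 := fun h => hl ((ZMod.intCast_zmod_eq_zero_iff_dvd l n).mp h)
  show Nat.card {f : ZMod n → Option (ZMod n) // IsEqv l u f} = _
  induction u using Equiv.Perm.cycle_induction_on with
  | base_one =>
    rw [Equiv.Perm.cycleType_one]
    simp only [Multiset.filter_zero, Multiset.card_zero, pow_zero]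
    rw [Nat.card_eq_one_iff_unique]
    refine ⟨⟨fun f g => Subtype.ext ?_⟩, ⟨⟨fun _ => none, fun j => rfl⟩⟩⟩
    funext j
    rw [eqv_fixed hl' f.2 (Perm.one_apply j), eqv_fixed hl' g.2 (Perm.one_apply j)]
  | base_cycles σ hσ =>
    rw [card_cycle hl' hσ, hσ.cycleType]
    by_cases hd : (n / l.gcd n) ∣ σ.support.card
    · simp [hd, Multiset.filter_singleton]
    · simp [hd, Multiset.filter_singleton]
  | induction_disjoint σ τ hdisj hc ih1 ih2 =>
    rw [card_mul hl' hdisj, ih1, ih2, hdisj.cycleType_mul, Multiset.filter_add,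
      Multiset.card_add, pow_add]
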